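/- Non-leaky SCCs can be realized as BSCCs: let I be an IMC on finite state set X with bounds Ť, T̂ satisfying Ť ≤ T̂ and ∑_y Ť(x,y) ≤ 1 ≤ ∑_y T̂(x,y) for all x. Let C ⊆ X be a set with no leaky states, i.e. for every x ∈ C: Ť(x, y) = 0 for all y ∉ C, and ∑_{y ∈ C} T̂(x, y) ≥ 1. Then there exists a Markov chain M induced by I such that every state in C transitions only within C (∑_{y ∈ C} T_M(x, y) = 1 for all x ∈ C). -/
import Mathlib

lemma fill_row {X : Type*} [Fintype X] (s : Finset X) (l u : X → ℝ)
    (hlu : ∀ y ∈ s, l y ≤ u y)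
    (hL : ∑ y ∈ s, l y ≤ 1) (hU : 1 ≤ ∑ y ∈ s, u y) :
    ∃ t : X → ℝ, (∀ y, y ∉ s → t y = 0) ∧ (∀ y ∈ s, l y ≤ t y ∧ t y ≤ u y) ∧
      ∑ y ∈ s, t y = 1 := by
  classical
  rcases eq_or_lt_of_le (Finset.sum_le_sum hlu) with h | h
  · have hL1 : ∑ y ∈ s, l y = 1 := le_antisymm hL (by rw [h]; exact hU)
    refine ⟨fun y => if y ∈ s then l y else 0, fun y hy => by simp [hy],
      fun y hy => ⟨by simp [hy], by simpa [hy] using hlu y hy⟩, ?_⟩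
    rwa [Finset.sum_ite_of_true (fun y hy => hy)]
  · set L := ∑ y ∈ s, l y with hLdef
    set U := ∑ y ∈ s, u y with hUdef
    set θ := (1 - L) / (U - L) with hθ
    have hd : (0:ℝ) < U - L := by linarith
    have hθ0 : 0 ≤ θ := div_nonneg (by linarith) hd.le
    have hθ1 : θ ≤ 1 := (div_le_one hd).mpr (by linarith)
    refine ⟨fun y => if y ∈ s then l y + θ * (u y - l y) else 0,
      fun y hy => by simp [hy], fun y hy => ?_, ?_⟩
    · have h1 : 0 ≤ u y - l y := by linarith [hlu y hy]
      simp only [hy, if_true]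
      constructor
      · nlinarith
      · nlinarith
    · rw [Finset.sum_ite_of_true (fun y hy => hy), Finset.sum_add_distrib,
        ← Finset.mul_sum, Finset.sum_sub_distrib, ← hLdef, ← hUdef, hθ,
        div_mul_cancel₀ _ hd.ne']
      ring

/-- Non-leaky SCCs can be realized as BSCCs: if no state of `C` is leaky (all
lower bounds out of `C` vanish and the upper bounds into `C` sum to at least
`1`), then the IMC induces a Markov chain in which every state of `C`
transitions only within `C`. -/
theorem nonleaky_realizable_as_absorbing {X : Type*} [Fintype X] [Nonempty X]
    (Tl Tu : X → X → ℝ)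
    (h01l : ∀ x y, Tl x y ∈ Set.Icc (0 : ℝ) 1)
    (h01u : ∀ x y, Tu x y ∈ Set.Icc (0 : ℝ) 1)
    (hle : ∀ x y, Tl x y ≤ Tu x y)
    (hlow : ∀ x, (∑ y, Tl x y) ≤ 1)
    (hup : ∀ x, 1 ≤ ∑ y, Tu x y)
    (C : Set X) [DecidablePred (· ∈ C)]
    (hC₁ : ∀ x ∈ C, ∀ y ∉ C, Tl x y = 0)
    (hC₂ : ∀ x ∈ C, 1 ≤ ∑ y ∈ Finset.univ.filter (· ∈ C), Tu x y) :
    ∃ T : X → X → ℝ,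
      (∀ x, ∑ y, T x y = 1) ∧
      (∀ x y, Tl x y ≤ T x y ∧ T x y ≤ Tu x y) ∧
      (∀ x ∈ C, ∑ y ∈ Finset.univ.filter (· ∈ C), T x y = 1) := by
  classical
  have hrow : ∀ x : X, ∃ t : X → ℝ,
      (∀ y, y ∉ (if x ∈ C then Finset.univ.filter (· ∈ C) else Finset.univ) → t y = 0) ∧
      (∀ y ∈ (if x ∈ C then Finset.univ.filter (· ∈ C) else Finset.univ), Tl x y ≤ t y ∧ t y ≤ Tu x y) ∧
      ∑ y ∈ (if x ∈ C then Finset.univ.filter (· ∈ C) else Finset.univ), t y = 1 := by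
    intro x
    by_cases hx : x ∈ C
    · simp only [hx, if_true]
      apply fill_row _ (Tl x) (Tu x) (fun y _ => hle x y)
      · refine le_trans ?_ (hlow x)
        exact Finset.sum_le_sum_of_subset_of_nonneg (Finset.filter_subset _ _)
          (fun y _ _ => (h01l x y).1)
      · exact hC₂ x hx
    · simp only [hx, if_false]
      exact fill_row _ (Tl x) (Tu x) (fun y _ => hle x y) (hlow x) (hup x)
  choose t ht0 htb hts using hrow
  refine ⟨t, ?_, ?_, ?_⟩
  · intro x
    by_cases hx : x ∈ C
    · have := hts x
      simp only [hx, if_true] at this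
      rw [← this]
      symm
      apply Finset.sum_subset (Finset.filter_subset _ _)
      intro y _ hy
      have := ht0 x y
      simp only [hx, if_true] at this
      exact this hy
    · have := hts x
      simpa [hx] using this
  · intro x y
    by_cases hx : x ∈ C
    · by_cases hy : y ∈ C
      · have := htb x y
        simp only [hx, if_true, Finset.mem_filter, Finset.mem_univ, true_and] at this
        exact this hy
      · have hz : t x y = 0 := by
          have := ht0 x y
          simp only [hx, if_true, Finset.mem_filter, Finset.mem_univ, true_and] at this
          exact this hy
        rw [hz, hC₁ x hx y hy]
        exact ⟨le_refl _, (h01u x y).1⟩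
    · have := htb x y
      simpa [hx] using this
  · intro x hx
    have := hts x
    simpa [hx] using this
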